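/- Let G be a group and A a G-hypereccentric normal subgroup of G. Then [A, G] = A. -/

import Mathlib

/-- A normal subgroup `A` of `G` is `G`-hypereccentric if it has an ascending series of
`G`-invariant subgroups, continuous at limits, whose successive factors are `G`-eccentric
`G`-chief factors. -/
def IsGHypereccentric {G : Type*} [Group G] (A : Subgroup G) : Prop :=
  ∃ (γ : Ordinal.{0}) (f : Ordinal.{0} → Subgroup G),
    f 0 = ⊥ ∧ f γ = A ∧ Monotone f ∧ (∀ α, (f α).Normal) ∧
    (∀ α ≤ γ, Order.IsSuccLimit α → f α = ⨆ β < α, f β) ∧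
    (∀ α < γ,
      (∀ N : Subgroup G, N.Normal → f α ≤ N → N ≤ f (α + 1) → N = f α ∨ N = f (α + 1)) ∧
      ¬ ⁅(⊤ : Subgroup G), f (α + 1)⁆ ≤ f α)

/-- If `A` is a `G`-hypereccentric normal subgroup of `G`, then `[A, G] = A`. -/
theorem commutator_eq_self_of_hypereccentric {G : Type*} [Group G] (A : Subgroup G)
    [A.Normal] (h : IsGHypereccentric A) :
    ⁅A, (⊤ : Subgroup G)⁆ = A := by
  obtain ⟨γ, f, h0, hγ, hmono, hnorm, hlim, hsucc⟩ := h
  refine le_antisymm (Subgroup.commutator_le_left A ⊤) ?_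
  have key : ∀ α, α ≤ γ → f α ≤ ⁅A, (⊤ : Subgroup G)⁆ := by
    intro α
    induction α using Ordinal.induction with
    | h α ih =>
      intro hαγ
      rcases Ordinal.zero_or_succ_or_isSuccLimit α with h0' | ⟨β, hβ⟩ | hl
      · subst h0'; rw [h0]; exact bot_le
      · rw [← Ordinal.add_one_eq_succ] at hβ
        subst hβ
        have hβlt : β < β + 1 := Ordinal.add_one_eq_succ β ▸ Order.lt_succ β
        have hβγ : β < γ := lt_of_lt_of_le hβlt hαγ
        obtain ⟨hchief, hecc⟩ := hsucc β hβγ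
        haveI := hnorm β
        haveI := hnorm (β + 1)
        have hNnorm : (f β ⊔ ⁅(⊤ : Subgroup G), f (β + 1)⁆).Normal :=
          Subgroup.sup_normal _ _
        have hN2 : f β ⊔ ⁅(⊤ : Subgroup G), f (β + 1)⁆ ≤ f (β + 1) :=
          sup_le (hmono hβlt.le) (Subgroup.commutator_le_right ⊤ (f (β + 1)))
        rcases hchief _ hNnorm le_sup_left hN2 with hEq | hEq
        · exact absurd (hEq ▸ le_sup_right) hecc
        · have hfA : f (β + 1) ≤ A := hγ ▸ hmono hαγ
          calc f (β + 1) = f β ⊔ ⁅(⊤ : Subgroup G), f (β + 1)⁆ := hEq.symm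
            _ ≤ ⁅A, (⊤ : Subgroup G)⁆ ⊔ ⁅(⊤ : Subgroup G), A⁆ :=
                sup_le_sup (ih β hβlt hβγ.le) (Subgroup.commutator_mono le_rfl hfA)
            _ = ⁅A, (⊤ : Subgroup G)⁆ := by
                rw [Subgroup.commutator_comm (⊤ : Subgroup G) A, sup_idem]
      · rw [hlim α hαγ hl]
        exact iSup_le fun β => iSup_le fun hβ => ih β hβ (le_of_lt (lt_of_lt_of_le hβ hαγ))
  conv_lhs => rw [← hγ]
  exact key γ le_rfl
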